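/- Let ψ = |ψ⟩⟨ψ| be a pure state on (ℂ^d)^{⊗n} and suppose ψ = Σ_{i=1}^k x_i σ_i is a finite decomposition with x_i ∈ ℝ and each σ_i a stabilizer state. Then Σ_{a∈ℤ_d^{2n}} |Tr(D_a† ψ)|⁴ ≥ d^n / (Σ_{i=1}^k |x_i|)². Equivalently, the robustness of magic 𝓡(ψ) satisfies 𝓡(ψ)² ≥ 1/(1 − M(ψ)), where M(ψ) = 1 − d^{−n} Σ_{a∈ℤ_d^{2n}} |Tr(D_a† ψ)|⁴ is the linear (2-Tsallis) stabilizer entropy. -/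

import Mathlib

open scoped BigOperators
open Matrix

noncomputable section

namespace MagicGap

/-- `ω = exp(2πi/d)`. -/
def omega (d : ℕ) : ℂ := Complex.exp (2 * Real.pi * Complex.I / d)

/-- `τ = −exp(iπ/d)`. -/
def tau (d : ℕ) : ℂ := -Complex.exp (Real.pi * Complex.I / d)

/-- Single-qudit displacement operator `D_(a₁,a₂) = τ^{a₁a₂} X^{a₁} Z^{a₂}`,
as a `d × d` matrix: its `(j,k)` entry is `τ^{a₁a₂} ω^{a₂ k} δ_{j, k+a₁ mod d}`. -/
def D1 (d : ℕ) (a : ℤ × ℤ) : Matrix (Fin d) (Fin d) ℂ := fun j k =>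
  tau d ^ (a.1 * a.2) * omega d ^ (a.2 * ((k : ℕ) : ℤ)) *
    (if ((j : ℕ) : ZMod d) = ((k : ℕ) : ZMod d) + (a.1 : ZMod d) then 1 else 0)

/-- Multi-qudit displacement operator on `(ℂ^d)^{⊗n}`, the tensor product of
single-qudit displacement operators. -/
def D (d n : ℕ) (a : Fin n → ℤ × ℤ) :
    Matrix (Fin n → Fin d) (Fin n → Fin d) ℂ := fun j k =>
  ∏ i, D1 d (a i) (j i) (k i)

/-- The symplectic form `[a,b] = Σᵢ (a_{2i} b_{2i−1} − a_{2i−1} b_{2i})`. -/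
def symp {n : ℕ} (a b : Fin n → ℤ × ℤ) : ℤ :=
  ∑ i, ((a i).2 * (b i).1 - (a i).1 * (b i).2)

/-- Standard representatives `{0,…,d−1}^{2n} ⊂ ℤ^{2n}` of `ℤ_d^{2n}`. -/
abbrev Reps (d n : ℕ) := Fin n → Fin d × Fin d

/-- View a representative as an integer vector. -/
def toZ {d n : ℕ} (a : Reps d n) : Fin n → ℤ × ℤ :=
  fun i => ((((a i).1 : ℕ) : ℤ), (((a i).2 : ℕ) : ℤ))

/-- The group `ℤ_d^{2n}`. -/
abbrev PS (d n : ℕ) := Fin n → ZMod d × ZMod d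

/-- Standard representative in `{0,…,d−1}^{2n} ⊂ ℤ^{2n}` of an element of `ℤ_d^{2n}`. -/
def repz {d n : ℕ} (a : PS d n) : Fin n → ℤ × ℤ :=
  fun i => (((a i).1.val : ℤ), ((a i).2.val : ℤ))

/-- Fourfold tensor product `A ⊗ B ⊗ C ⊗ E` of operators on `H^{⊗4}`. -/
def tens4 {I : Type*} (A B C E : Matrix I I ℂ) :
    Matrix (Fin 4 → I) (Fin 4 → I) ℂ := fun j k =>
  A (j 0) (k 0) * B (j 1) (k 1) * C (j 2) (k 2) * E (j 3) (k 3)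

/-- `A^{⊗4}`. -/
def pow4 {I : Type*} (A : Matrix I I ℂ) : Matrix (Fin 4 → I) (Fin 4 → I) ℂ :=
  tens4 A A A A

/-- `Q = d^{−2n} Σ_{a∈ℤ_d^{2n}} D_a ⊗ D_a† ⊗ D_a ⊗ D_a†`. -/
def Q (d n : ℕ) : Matrix (Fin 4 → (Fin n → Fin d)) (Fin 4 → (Fin n → Fin d)) ℂ :=
  ((d : ℂ) ^ (2 * n))⁻¹ •
    ∑ a : Reps d n,
      tens4 (D d n (toZ a)) (D d n (toZ a))ᴴ (D d n (toZ a)) (D d n (toZ a))ᴴ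

/-- The unitary `T_π` permuting the four tensor factors of `H^{⊗4}`. -/
def permOp (I : Type*) [DecidableEq I] (π : Equiv.Perm (Fin 4)) :
    Matrix (Fin 4 → I) (Fin 4 → I) ℂ := fun j k =>
  if ∀ m, j m = k (π m) then 1 else 0

/-- `Π_{sym⁴} = (1/24) Σ_{π∈S₄} T_π`, the projector onto the symmetric subspace
of `H^{⊗4}`. -/
def piSym4 (I : Type*) [DecidableEq I] : Matrix (Fin 4 → I) (Fin 4 → I) ℂ :=
  (24 : ℂ)⁻¹ • ∑ π : Equiv.Perm (Fin 4), permOp I π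

/-- A totally isotropic subgroup of `ℤ_d^{2n}`: all pairwise symplectic products
vanish mod `d`. -/
def IsIsotropic (d n : ℕ) (S : AddSubgroup (PS d n)) : Prop :=
  ∀ a ∈ S, ∀ b ∈ S, ((symp (repz a) (repz b) : ℤ) : ZMod d) = 0

open Classical in
/-- Stabilizer projector with trivial homomorphism: `Π_𝒮 = |𝒮|⁻¹ Σ_{a∈𝒮} D_a`. -/
def stabProj (d n : ℕ) [NeZero d] (S : AddSubgroup (PS d n)) :
    Matrix (Fin n → Fin d) (Fin n → Fin d) ℂ :=
  (Nat.card S : ℂ)⁻¹ • ∑ a : PS d n, if a ∈ S then D d n (repz a) else 0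

/-- `𝒮^⊥ = {a : [a,b] ≡ 0 (mod d) for all b ∈ 𝒮}`. -/
def perp (d n : ℕ) (S : AddSubgroup (PS d n)) : Set (PS d n) :=
  {a | ∀ b ∈ S, ((symp (repz a) (repz b) : ℤ) : ZMod d) = 0}

/-- `A_𝒮 = {a ∈ ℤ_d^{2n} : 2a mod d ∈ 𝒮 and a ∈ 𝒮^⊥}`. -/
def ASet (d n : ℕ) (S : AddSubgroup (PS d n)) : Set (PS d n) :=
  {a | 2 • a ∈ S ∧ a ∈ perp d n S}

/-- The average extrinsic stabilizer-entropy of the code space of `𝒮`: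
`1 − d_B · C(d_S+3,4)⁻¹ · Tr(Q Π_𝒮^{⊗4} Π_{sym⁴})`. -/
def gapBigTerm (d n : ℕ) [NeZero d] (S : AddSubgroup (PS d n)) (dS : ℕ) : ℂ :=
  1 - (d : ℂ) ^ n * ((Nat.choose (dS + 3) 4 : ℕ) : ℂ)⁻¹ *
    trace (Q d n * pow4 (stabProj d n S) * piSym4 (Fin n → Fin d))

/-- The average intrinsic stabilizer entropy of a single qudit `ℂ^{d_S}`:
`1 − d_S · C(d_S+3,4)⁻¹ · Tr(Q_S Π^S_{sym⁴})`. -/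
def smallTermQudit (dS : ℕ) : ℂ :=
  1 - (dS : ℂ) * ((Nat.choose (dS + 3) 4 : ℕ) : ℂ)⁻¹ *
    trace (Q dS 1 * piSym4 (Fin 1 → Fin dS))

/-- The average intrinsic stabilizer entropy of `m` qubits `(ℂ²)^{⊗m}`:
`1 − 2^m · C(2^m+3,4)⁻¹ · Tr(Q_S Π^S_{sym⁴})`. -/
def smallTermQubits (m : ℕ) : ℂ :=
  1 - (2 : ℂ) ^ m * ((Nat.choose (2 ^ m + 3) 4 : ℕ) : ℂ)⁻¹ *
    trace (Q 2 m * piSym4 (Fin m → Fin 2))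

open Classical in
/-- A stabilizer state on `(ℂ^d)^{⊗n}`: a rank-one orthogonal projector of the form
`σ = d^{−n} Σ_{a∈𝒮} ω^{f(a)} D_a` for a totally isotropic subgroup `𝒮 ⊆ ℤ_d^{2n}`
of order `d^n` and a group homomorphism `f : 𝒮 → ℤ_d`. -/
def IsStabilizerState (d n : ℕ) [NeZero d]
    (σ : Matrix (Fin n → Fin d) (Fin n → Fin d) ℂ) : Prop :=
  σ * σ = σ ∧ σᴴ = σ ∧ σ.rank = 1 ∧
  ∃ (S : AddSubgroup (PS d n)) (f : PS d n → ZMod d),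
    IsIsotropic d n S ∧ Nat.card S = d ^ n ∧
    (∀ a ∈ S, ∀ b ∈ S, f (a + b) = f a + f b) ∧
    σ = ((d : ℂ) ^ n)⁻¹ •
      ∑ a : PS d n, if a ∈ S then omega d ^ (f a).val • D d n (repz a) else 0

lemma omega_prim (d : ℕ) [NeZero d] : IsPrimitiveRoot (omega d) d :=
  Complex.isPrimitiveRoot_exp d (NeZero.ne d)

lemma omega_ne_zero (d : ℕ) : omega d ≠ 0 := Complex.exp_ne_zero _

lemma abs_omega (d : ℕ) : ‖omega d‖ = 1 := by
  have : (2 * Real.pi * Complex.I / d) = ((2 * Real.pi / d : ℝ) : ℂ) * Complex.I := by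
    push_cast; ring
  rw [omega, this, Complex.norm_exp_ofReal_mul_I]

lemma conj_omega_zpow (d : ℕ) (m : ℤ) :
    (starRingEnd ℂ) (omega d ^ m) = (omega d)⁻¹ ^ m := by
  rw [map_zpow₀]
  congr 1
  rw [← Complex.norm_mul_exp_arg_mul_I (omega d), abs_omega]
  simp [← Complex.exp_conj, ← Complex.exp_neg]

lemma conj_tau_zpow_mul_self (d : ℕ) (m : ℤ) :
    (starRingEnd ℂ) (tau d ^ m) * tau d ^ m = 1 := by
  rw [map_zpow₀, ← mul_zpow]
  have : (starRingEnd ℂ) (tau d) * tau d = 1 := by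
    rw [tau]
    simp only [map_neg, ← Complex.exp_conj, neg_mul_neg, ← Complex.exp_add]
    have : (starRingEnd ℂ) (↑Real.pi * Complex.I / ↑d) = -(↑Real.pi * Complex.I / ↑d) := by
      simp [div_eq_mul_inv]
    rw [this, neg_add_cancel, Complex.exp_zero]
  rw [this, _root_.one_zpow]

lemma geom_sum_omega (d : ℕ) [NeZero d] (m : ℤ) :
    ∑ t : Fin d, omega d ^ (m * (t : ℤ)) = if (d : ℤ) ∣ m then (d : ℂ) else 0 := by
  have hz : ∀ t : Fin d, omega d ^ (m * (t:ℤ)) = (omega d ^ m) ^ (t : ℕ) := by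
    intro t
    rw [_root_.zpow_mul, ← zpow_natCast]
  simp only [hz]
  rw [Fin.sum_univ_eq_sum_range (fun t => (omega d ^ m) ^ t)]
  by_cases h : (d : ℤ) ∣ m
  · rw [if_pos h, ((omega_prim d).zpow_eq_one_iff_dvd m).2 h]
    simp
  · rw [if_neg h]
    have hne : omega d ^ m ≠ 1 := fun hc => h (((omega_prim d).zpow_eq_one_iff_dvd m).1 hc)
    rw [geom_sum_eq hne]
    have : (omega d ^ m) ^ d = 1 := by
      rw [← zpow_natCast, ← _root_.zpow_mul, mul_comm, _root_.zpow_mul, (omega_prim d).zpow_eq_one, _root_.one_zpow]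
    rw [this]
    simp

/-- Fin d ≃ ZMod d -/

def e1 (d : ℕ) [NeZero d] : Fin d ≃ ZMod d where
  toFun t := ((t : ℕ) : ZMod d)
  invFun z := ⟨z.val, ZMod.val_lt z⟩
  left_inv t := by
    ext; exact ZMod.val_natCast_of_lt t.isLt
  right_inv z := by
    simp [ZMod.natCast_val, ZMod.cast_id]

lemma cast_fin_inj (d : ℕ) [NeZero d] {x y : Fin d} (h : ((x:ℕ) : ZMod d) = ((y:ℕ) : ZMod d)) : x = y := by
  have := congrArg ZMod.val h
  rw [ZMod.val_natCast_of_lt x.isLt, ZMod.val_natCast_of_lt y.isLt] at this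
  exact Fin.ext this

lemma summand_eq (d : ℕ) [NeZero d] (c : Fin d × Fin d) (x y x' y' : Fin d) :
    (starRingEnd ℂ) (D1 d (((c.1:ℕ):ℤ), ((c.2:ℕ):ℤ)) x y) * D1 d (((c.1:ℕ):ℤ), ((c.2:ℕ):ℤ)) x' y'
    = omega d ^ ((((y':ℕ):ℤ) - ((y:ℕ):ℤ)) * ((c.2:ℕ):ℤ)) *
      ((if ((x:ℕ) : ZMod d) = ((y:ℕ) : ZMod d) + ((c.1:ℕ) : ZMod d) then (1:ℂ) else 0) *
       (if ((x':ℕ) : ZMod d) = ((y':ℕ) : ZMod d) + ((c.1:ℕ) : ZMod d) then (1:ℂ) else 0)) := by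
  simp only [D1, _root_.map_mul]
  have hconjite : (starRingEnd ℂ) (if ((x:ℕ) : ZMod d) = ((y:ℕ) : ZMod d) + ((((c.1:ℕ):ℤ)) : ZMod d) then (1:ℂ) else 0)
      = if ((x:ℕ) : ZMod d) = ((y:ℕ) : ZMod d) + ((c.1:ℕ) : ZMod d) then (1:ℂ) else 0 := by
    push_cast
    split <;> simp
  rw [hconjite]
  have hc1 : ((((c.1:ℕ):ℤ)) : ZMod d) = ((c.1:ℕ) : ZMod d) := by push_cast; rfl
  rw [hc1]
  have htau := conj_tau_zpow_mul_self d (((c.1:ℕ):ℤ) * ((c.2:ℕ):ℤ))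
  have homega : (starRingEnd ℂ) (omega d ^ (((c.2:ℕ):ℤ) * ((y:ℕ):ℤ))) * omega d ^ (((c.2:ℕ):ℤ) * ((y':ℕ):ℤ))
      = omega d ^ ((((y':ℕ):ℤ) - ((y:ℕ):ℤ)) * ((c.2:ℕ):ℤ)) := by
    rw [conj_omega_zpow, _root_.inv_zpow, ← _root_.zpow_neg, ← zpow_add₀ (omega_ne_zero d)]
    ring_nf
  calc (starRingEnd ℂ) (tau d ^ (((c.1:ℕ):ℤ) * ((c.2:ℕ):ℤ))) * (starRingEnd ℂ) (omega d ^ (((c.2:ℕ):ℤ) * ((y:ℕ):ℤ))) *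
        (if ((x:ℕ) : ZMod d) = ((y:ℕ) : ZMod d) + ((c.1:ℕ) : ZMod d) then (1:ℂ) else 0) *
        (tau d ^ (((c.1:ℕ):ℤ) * ((c.2:ℕ):ℤ)) * omega d ^ (((c.2:ℕ):ℤ) * ((y':ℕ):ℤ)) *
         (if ((x':ℕ) : ZMod d) = ((y':ℕ) : ZMod d) + ((c.1:ℕ) : ZMod d) then (1:ℂ) else 0))
      = ((starRingEnd ℂ) (tau d ^ (((c.1:ℕ):ℤ) * ((c.2:ℕ):ℤ))) * tau d ^ (((c.1:ℕ):ℤ) * ((c.2:ℕ):ℤ))) *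
        ((starRingEnd ℂ) (omega d ^ (((c.2:ℕ):ℤ) * ((y:ℕ):ℤ))) * omega d ^ (((c.2:ℕ):ℤ) * ((y':ℕ):ℤ))) *
        ((if ((x:ℕ) : ZMod d) = ((y:ℕ) : ZMod d) + ((c.1:ℕ) : ZMod d) then (1:ℂ) else 0) *
         (if ((x':ℕ) : ZMod d) = ((y':ℕ) : ZMod d) + ((c.1:ℕ) : ZMod d) then (1:ℂ) else 0)) := by ring
    _ = _ := by rw [htau, homega, one_mul]

lemma dvd_sub_iff (d : ℕ) [NeZero d] (y y' : Fin d) :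
    (d:ℤ) ∣ ((y':ℕ):ℤ) - ((y:ℕ):ℤ) ↔ y = y' := by
  constructor
  · intro h
    have hb : (((y':ℕ):ℤ) - ((y:ℕ):ℤ)) = 0 := by
      rcases h with ⟨k, hk⟩
      have h1 : ((y':ℕ):ℤ) < d := by exact_mod_cast y'.isLt
      have h2 : ((y:ℕ):ℤ) < d := by exact_mod_cast y.isLt
      have h3 : (0:ℤ) ≤ ((y':ℕ):ℤ) := by positivity
      have h4 : (0:ℤ) ≤ ((y:ℕ):ℤ) := by positivity
      have hd : (0:ℤ) < d := by exact_mod_cast Nat.pos_of_ne_zero (NeZero.ne d)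
      have h5 : (d:ℤ)*k < d*1 := by linarith
      have h6 : (d:ℤ)*(-1) < d*k := by linarith
      have k1 : k < 1 := (mul_lt_mul_iff_right₀ hd).mp h5
      have k2 : -1 < k := (mul_lt_mul_iff_right₀ hd).mp h6
      have : k = 0 := by omega
      rw [hk, this, mul_zero]
    have : ((y':ℕ):ℤ) = ((y:ℕ):ℤ) := by linarith
    exact (Fin.ext (by exact_mod_cast this)).symm
  · rintro rfl; simp

lemma sum_ite_c1 (d : ℕ) [NeZero d] (x y x' y' : Fin d) :
    ∑ c1 : Fin d, ((if ((x:ℕ) : ZMod d) = ((y:ℕ) : ZMod d) + ((c1:ℕ) : ZMod d) then (1:ℂ) else 0) *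
       (if ((x':ℕ) : ZMod d) = ((y':ℕ) : ZMod d) + ((c1:ℕ) : ZMod d) then (1:ℂ) else 0))
    = if ((x':ℕ):ZMod d) - ((y':ℕ):ZMod d) = ((x:ℕ):ZMod d) - ((y:ℕ):ZMod d) then 1 else 0 := by
  have step : (∑ c1 : Fin d, ((if ((x:ℕ) : ZMod d) = ((y:ℕ) : ZMod d) + ((c1:ℕ) : ZMod d) then (1:ℂ) else 0) *
       (if ((x':ℕ) : ZMod d) = ((y':ℕ) : ZMod d) + ((c1:ℕ) : ZMod d) then (1:ℂ) else 0)))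
      = ∑ z : ZMod d, ((if ((x:ℕ) : ZMod d) = ((y:ℕ) : ZMod d) + z then (1:ℂ) else 0) *
       (if ((x':ℕ) : ZMod d) = ((y':ℕ) : ZMod d) + z then (1:ℂ) else 0)) :=
    Fintype.sum_equiv (e1 d) _ _ (fun c1 => rfl)
  rw [step]
  have : ∀ z : ZMod d, (if ((x:ℕ) : ZMod d) = ((y:ℕ) : ZMod d) + z then (1:ℂ) else 0) *
       (if ((x':ℕ) : ZMod d) = ((y':ℕ) : ZMod d) + z then (1:ℂ) else 0)
      = if z = ((x:ℕ):ZMod d) - ((y:ℕ):ZMod d) then (if ((x':ℕ) : ZMod d) = ((y':ℕ) : ZMod d) + z then (1:ℂ) else 0) else 0 := by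
    intro z
    have : (((x:ℕ) : ZMod d) = ((y:ℕ) : ZMod d) + z) ↔ z = ((x:ℕ):ZMod d) - ((y:ℕ):ZMod d) := by
      constructor
      · intro h; rw [h]; ring
      · intro h; rw [h]; ring
    simp only [this]
    split <;> simp
  simp only [this]
  rw [Finset.sum_ite_eq' Finset.univ]
  simp only [Finset.mem_univ, if_true]
  by_cases hxy : ((x':ℕ):ZMod d) - ((y':ℕ):ZMod d) = ((x:ℕ):ZMod d) - ((y:ℕ):ZMod d)
  · rw [if_pos hxy, if_pos]
    rw [← hxy]; ring
  · rw [if_neg hxy, if_neg]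
    intro h
    apply hxy
    rw [h]; ring

lemma sum_conj_D1_mul (d : ℕ) [NeZero d] (x y x' y' : Fin d) :
    ∑ c : Fin d × Fin d, (starRingEnd ℂ) (D1 d (((c.1:ℕ):ℤ), ((c.2:ℕ):ℤ)) x y) *
      D1 d (((c.1:ℕ):ℤ), ((c.2:ℕ):ℤ)) x' y'
    = if x = x' ∧ y = y' then (d:ℂ) else 0 := by
  simp only [summand_eq]
  rw [Fintype.sum_prod_type]
  have key : ∀ c1 : Fin d, (∑ c2 : Fin d, omega d ^ ((((y':ℕ):ℤ) - ((y:ℕ):ℤ)) * ((c2:ℕ):ℤ)) *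
      ((if ((x:ℕ) : ZMod d) = ((y:ℕ) : ZMod d) + ((c1:ℕ) : ZMod d) then (1:ℂ) else 0) *
       (if ((x':ℕ) : ZMod d) = ((y':ℕ) : ZMod d) + ((c1:ℕ) : ZMod d) then (1:ℂ) else 0)))
      = (if (d:ℤ) ∣ (((y':ℕ):ℤ) - ((y:ℕ):ℤ)) then (d:ℂ) else 0) *
        ((if ((x:ℕ) : ZMod d) = ((y:ℕ) : ZMod d) + ((c1:ℕ) : ZMod d) then (1:ℂ) else 0) *
         (if ((x':ℕ) : ZMod d) = ((y':ℕ) : ZMod d) + ((c1:ℕ) : ZMod d) then (1:ℂ) else 0)) := by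
    intro c1
    rw [← Finset.sum_mul, geom_sum_omega]
  simp only [key]
  rw [← Finset.mul_sum, sum_ite_c1]
  by_cases hy : y = y'
  · subst hy
    rw [if_pos ((dvd_sub_iff d y y).mpr rfl)]
    by_cases hx : x = x'
    · subst hx
      simp
    · rw [if_neg (fun h : x = x' ∧ y = y => hx h.1), if_neg, mul_zero]
      intro h
      apply hx
      apply cast_fin_inj d
      have := congrArg (· + ((y:ℕ):ZMod d)) h
      simpa using this.symm
  · rw [if_neg (fun h => hy ((dvd_sub_iff d y y').mp h)), zero_mul,
      if_neg (fun h : x = x' ∧ y = y' => hy h.2)]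

lemma dvd_sub_iff_nat (d : ℕ) [NeZero d] {a b : ℕ} (ha : a < d) (hb : b < d) :
    (d:ℤ) ∣ (b:ℤ) - (a:ℤ) ↔ a = b := by
  constructor
  · intro h
    have hb0 : ((b:ℤ) - (a:ℤ)) = 0 := by
      rcases h with ⟨k, hk⟩
      have h1 : (b:ℤ) < d := by exact_mod_cast hb
      have h2 : (a:ℤ) < d := by exact_mod_cast ha
      have h3 : (0:ℤ) ≤ (b:ℤ) := by positivity
      have h4 : (0:ℤ) ≤ (a:ℤ) := by positivity
      have hd : (0:ℤ) < d := by exact_mod_cast Nat.pos_of_ne_zero (NeZero.ne d)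
      have h5 : (d:ℤ)*k < d*1 := by linarith
      have h6 : (d:ℤ)*(-1) < d*k := by linarith
      have k1 : k < 1 := (mul_lt_mul_iff_right₀ hd).mp h5
      have k2 : -1 < k := (mul_lt_mul_iff_right₀ hd).mp h6
      have : k = 0 := by omega
      rw [hk, this, mul_zero]
    omega
  · rintro rfl; simp

lemma natCast_zmod_inj (d : ℕ) [NeZero d] {a b : ℕ} (ha : a < d) (hb : b < d)
    (h : (a : ZMod d) = (b : ZMod d)) : a = b := by
  have := congrArg ZMod.val h
  rwa [ZMod.val_natCast_of_lt ha, ZMod.val_natCast_of_lt hb] at this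

lemma sum_ite_y (d : ℕ) [NeZero d] (x : Fin d) (k1 k1' : ℕ) :
    (∑ y : Fin d, (if ((y:ℕ) : ZMod d) = ((x:ℕ) : ZMod d) + (k1 : ZMod d) then (1:ℂ) else 0) *
      (if ((y:ℕ) : ZMod d) = ((x:ℕ) : ZMod d) + (k1' : ZMod d) then (1:ℂ) else 0))
    = if (k1 : ZMod d) = (k1' : ZMod d) then 1 else 0 := by
  have step : (∑ y : Fin d, (if ((y:ℕ) : ZMod d) = ((x:ℕ) : ZMod d) + (k1 : ZMod d) then (1:ℂ) else 0) *
      (if ((y:ℕ) : ZMod d) = ((x:ℕ) : ZMod d) + (k1' : ZMod d) then (1:ℂ) else 0))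
      = ∑ z : ZMod d, (if z = ((x:ℕ) : ZMod d) + (k1 : ZMod d) then (1:ℂ) else 0) *
      (if z = ((x:ℕ) : ZMod d) + (k1' : ZMod d) then (1:ℂ) else 0) :=
    Fintype.sum_equiv (e1 d) _ _ (fun c1 => rfl)
  rw [step]
  have : ∀ z : ZMod d, (if z = ((x:ℕ) : ZMod d) + (k1 : ZMod d) then (1:ℂ) else 0) *
      (if z = ((x:ℕ) : ZMod d) + (k1' : ZMod d) then (1:ℂ) else 0)
      = if z = ((x:ℕ) : ZMod d) + (k1 : ZMod d) then
          (if z = ((x:ℕ) : ZMod d) + (k1' : ZMod d) then (1:ℂ) else 0) else 0 := by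
    intro z; split <;> simp
  simp only [this]
  rw [Finset.sum_ite_eq' Finset.univ]
  simp only [Finset.mem_univ, if_true]
  by_cases h : (k1 : ZMod d) = (k1' : ZMod d)
  · rw [if_pos h, if_pos (by rw [h])]
  · rw [if_neg h, if_neg (fun hc => h (by exact add_left_cancel hc))]

lemma trace_D1_orth (d : ℕ) [NeZero d] (k1 k2 k1' k2' : ℕ)
    (h1 : k1 < d) (h2 : k2 < d) (h1' : k1' < d) (h2' : k2' < d) :
    (∑ x : Fin d, ∑ y : Fin d, (starRingEnd ℂ) (D1 d ((k1:ℤ),(k2:ℤ)) y x) * D1 d ((k1':ℤ),(k2':ℤ)) y x)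
    = if k1 = k1' ∧ k2 = k2' then (d:ℂ) else 0 := by
  have hsummand : ∀ x y : Fin d,
      (starRingEnd ℂ) (D1 d ((k1:ℤ),(k2:ℤ)) y x) * D1 d ((k1':ℤ),(k2':ℤ)) y x
      = ((starRingEnd ℂ) (tau d ^ ((k1:ℤ) * (k2:ℤ))) * tau d ^ ((k1':ℤ) * (k2':ℤ)) *
          omega d ^ (((k2':ℤ) - (k2:ℤ)) * ((x:ℕ):ℤ))) *
        ((if ((y:ℕ) : ZMod d) = ((x:ℕ) : ZMod d) + (k1 : ZMod d) then (1:ℂ) else 0) *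
         (if ((y:ℕ) : ZMod d) = ((x:ℕ) : ZMod d) + (k1' : ZMod d) then (1:ℂ) else 0)) := by
    intro x y
    simp only [D1, _root_.map_mul]
    have hconjite : (starRingEnd ℂ) (if ((y:ℕ) : ZMod d) = ((x:ℕ) : ZMod d) + (((k1:ℤ)) : ZMod d) then (1:ℂ) else 0)
        = if ((y:ℕ) : ZMod d) = ((x:ℕ) : ZMod d) + (k1 : ZMod d) then (1:ℂ) else 0 := by
      push_cast
      split <;> simp
    rw [hconjite]
    have hk1' : (((k1':ℤ)) : ZMod d) = ((k1' : ℕ) : ZMod d) := by push_cast; rfl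
    rw [hk1']
    have homega : (starRingEnd ℂ) (omega d ^ ((k2:ℤ) * ((x:ℕ):ℤ))) * omega d ^ ((k2':ℤ) * ((x:ℕ):ℤ))
        = omega d ^ (((k2':ℤ) - (k2:ℤ)) * ((x:ℕ):ℤ)) := by
      rw [conj_omega_zpow, _root_.inv_zpow, ← _root_.zpow_neg, ← zpow_add₀ (omega_ne_zero d)]
      ring_nf
    rw [← homega]
    ring
  simp only [hsummand]
  simp only [← Finset.mul_sum, sum_ite_y]
  by_cases hk1 : k1 = k1'
  · subst hk1
    simp only [if_pos rfl, mul_one]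
    rw [← Finset.sum_mul]
    have hg : (∑ x : Fin d, (starRingEnd ℂ) (tau d ^ ((k1:ℤ) * (k2:ℤ))) * tau d ^ ((k1:ℤ) * (k2':ℤ)) *
        omega d ^ (((k2':ℤ) - (k2:ℤ)) * ((x:ℕ):ℤ)))
        = ((starRingEnd ℂ) (tau d ^ ((k1:ℤ) * (k2:ℤ))) * tau d ^ ((k1:ℤ) * (k2':ℤ))) *
          (if (d:ℤ) ∣ ((k2':ℤ) - (k2:ℤ)) then (d:ℂ) else 0) := by
      rw [← geom_sum_omega d, Finset.mul_sum]
    rw [hg]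
    simp only [if_true, true_and, mul_one]
    by_cases hk2 : k2 = k2'
    · subst hk2
      rw [if_pos ((dvd_sub_iff_nat d h2 h2).mpr rfl), if_pos rfl,
        conj_tau_zpow_mul_self d, one_mul]
    · rw [if_neg (fun h => hk2 ((dvd_sub_iff_nat d h2 h2').mp h)), mul_zero,
        if_neg hk2]
  · have : ((k1:ℕ) : ZMod d) ≠ ((k1':ℕ) : ZMod d) := fun h => hk1 (natCast_zmod_inj d h1 h1' h)
    simp only [if_neg this, mul_zero, Finset.sum_const_zero,
      if_neg (fun h : k1 = k1' ∧ k2 = k2' => hk1 h.1)]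

def eR (d n : ℕ) [NeZero d] : Reps d n ≃ PS d n :=
  Equiv.piCongrRight (fun _ => Equiv.prodCongr (e1 d) (e1 d))

lemma repz_eR (d n : ℕ) [NeZero d] (a : Reps d n) : repz (eR d n a) = toZ a := by
  funext i
  show ((((((a i).1:ℕ) : ZMod d)).val : ℤ), (((((a i).2:ℕ) : ZMod d)).val : ℤ)) = _
  rw [ZMod.val_natCast_of_lt (a i).1.isLt, ZMod.val_natCast_of_lt (a i).2.isLt]
  rfl

lemma repz_inj (d n : ℕ) [NeZero d] {b b' : PS d n} (h : repz b = repz b') : b = b' := by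
  funext i
  have h1 := congrFun h i
  simp only [repz, Prod.mk.injEq] at h1
  have e1 : (b i).1.val = (b' i).1.val := by exact_mod_cast h1.1
  have e2 : (b i).2.val = (b' i).2.val := by exact_mod_cast h1.2
  ext
  · exact ZMod.val_injective d e1
  · exact ZMod.val_injective d e2

lemma toZ_eq_repz_iff (d n : ℕ) [NeZero d] (a : Reps d n) (b : PS d n) :
    toZ a = repz b ↔ b = eR d n a := by
  constructor
  · intro h
    exact (repz_inj d n (h ▸ repz_eR d n a)).symm
  · rintro rfl
    exact (repz_eR d n a).symm

lemma sum_conj_D_mul (d n : ℕ) [NeZero d] (x y x' y' : Fin n → Fin d) :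
    (∑ a : Reps d n, (starRingEnd ℂ) (D d n (toZ a) x y) * D d n (toZ a) x' y')
    = if x = x' ∧ y = y' then ((d:ℂ))^n else 0 := by
  have h1 : ∀ a : Reps d n, (starRingEnd ℂ) (D d n (toZ a) x y) * D d n (toZ a) x' y'
      = ∏ i, ((starRingEnd ℂ) (D1 d ((((a i).1:ℕ):ℤ), (((a i).2:ℕ):ℤ)) (x i) (y i)) *
          D1 d ((((a i).1:ℕ):ℤ), (((a i).2:ℕ):ℤ)) (x' i) (y' i)) := by
    intro a
    rw [D, D, map_prod, ← Finset.prod_mul_distrib]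
    rfl
  simp only [h1]
  have h2 : (∑ a : Reps d n, ∏ i, ((starRingEnd ℂ) (D1 d ((((a i).1:ℕ):ℤ), (((a i).2:ℕ):ℤ)) (x i) (y i)) *
          D1 d ((((a i).1:ℕ):ℤ), (((a i).2:ℕ):ℤ)) (x' i) (y' i)))
      = ∏ i, ∑ c : Fin d × Fin d, ((starRingEnd ℂ) (D1 d (((c.1:ℕ):ℤ), ((c.2:ℕ):ℤ)) (x i) (y i)) *
          D1 d (((c.1:ℕ):ℤ), ((c.2:ℕ):ℤ)) (x' i) (y' i)) := by
    rw [Finset.prod_univ_sum]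
    rw [Fintype.piFinset_univ]
  rw [h2]
  simp only [sum_conj_D1_mul]
  by_cases h : x = x' ∧ y = y'
  · rw [if_pos h]
    obtain ⟨hx, hy⟩ := h
    subst hx; subst hy
    simp
  · rw [if_neg h]
    have : ∃ i, ¬(x i = x' i ∧ y i = y' i) := by
      by_contra hc
      push_neg at hc
      exact h ⟨funext (fun i => (hc i).1), funext (fun i => (hc i).2)⟩
    obtain ⟨i, hi⟩ := this
    exact Finset.prod_eq_zero (Finset.mem_univ i) (if_neg hi)

lemma trace_D_orth (d n : ℕ) [NeZero d] (a : Reps d n) (b : PS d n) :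
    trace ((D d n (toZ a))ᴴ * D d n (repz b)) = if b = eR d n a then ((d:ℂ))^n else 0 := by
  have h0 : trace ((D d n (toZ a))ᴴ * D d n (repz b))
      = ∑ x : Fin n → Fin d, ∑ y : Fin n → Fin d,
          (starRingEnd ℂ) (D d n (toZ a) y x) * D d n (repz b) y x := by
    simp [Matrix.trace, Matrix.mul_apply, Matrix.conjTranspose_apply, Matrix.diag]
  rw [h0]
  have h1 : ∀ x y : Fin n → Fin d, (starRingEnd ℂ) (D d n (toZ a) y x) * D d n (repz b) y x
      = ∏ i, ((starRingEnd ℂ) (D1 d (((((a i).1:ℕ)):ℤ), ((((a i).2:ℕ)):ℤ)) (y i) (x i)) *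
          D1 d ((((b i).1.val:ℕ):ℤ), (((b i).2.val:ℕ):ℤ)) (y i) (x i)) := by
    intro x y
    rw [D, D, map_prod, ← Finset.prod_mul_distrib]
    rfl
  simp only [h1]
  have h2 : (∑ x : Fin n → Fin d, ∑ y : Fin n → Fin d,
      ∏ i, ((starRingEnd ℂ) (D1 d (((((a i).1:ℕ)):ℤ), ((((a i).2:ℕ)):ℤ)) (y i) (x i)) *
          D1 d ((((b i).1.val:ℕ):ℤ), (((b i).2.val:ℕ):ℤ)) (y i) (x i)))
      = ∏ i, ∑ xc : Fin d, ∑ yc : Fin d,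
          ((starRingEnd ℂ) (D1 d (((((a i).1:ℕ)):ℤ), ((((a i).2:ℕ)):ℤ)) yc xc) *
          D1 d ((((b i).1.val:ℕ):ℤ), (((b i).2.val:ℕ):ℤ)) yc xc) := by
    have inner : ∀ x : Fin n → Fin d, (∑ y : Fin n → Fin d,
        ∏ i, ((starRingEnd ℂ) (D1 d (((((a i).1:ℕ)):ℤ), ((((a i).2:ℕ)):ℤ)) (y i) (x i)) *
          D1 d ((((b i).1.val:ℕ):ℤ), (((b i).2.val:ℕ):ℤ)) (y i) (x i)))
        = ∏ i, ∑ yc : Fin d,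
          ((starRingEnd ℂ) (D1 d (((((a i).1:ℕ)):ℤ), ((((a i).2:ℕ)):ℤ)) yc (x i)) *
          D1 d ((((b i).1.val:ℕ):ℤ), (((b i).2.val:ℕ):ℤ)) yc (x i)) := by
      intro x
      rw [Finset.prod_univ_sum, Fintype.piFinset_univ]
    simp only [inner]
    rw [Finset.prod_univ_sum, Fintype.piFinset_univ]
  rw [h2]
  have h3 : ∀ i : Fin n, (∑ xc : Fin d, ∑ yc : Fin d,
      ((starRingEnd ℂ) (D1 d (((((a i).1:ℕ)):ℤ), ((((a i).2:ℕ)):ℤ)) yc xc) *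
          D1 d ((((b i).1.val:ℕ):ℤ), (((b i).2.val:ℕ):ℤ)) yc xc))
      = if (((a i).1:ℕ) = (b i).1.val ∧ ((a i).2:ℕ) = (b i).2.val) then (d:ℂ) else 0 :=
    fun i => trace_D1_orth d _ _ _ _ (a i).1.isLt (a i).2.isLt (ZMod.val_lt _) (ZMod.val_lt _)
  simp only [h3]
  have hcond : (∀ i : Fin n, (((a i).1:ℕ) = (b i).1.val ∧ ((a i).2:ℕ) = (b i).2.val)) ↔ b = eR d n a := by
    constructor
    · intro h
      apply repz_inj d n
      rw [repz_eR]
      funext i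
      show ((((b i).1.val:ℕ):ℤ), (((b i).2.val:ℕ):ℤ)) = ((((a i).1:ℕ):ℤ), (((a i).2:ℕ):ℤ))
      rw [(h i).1, (h i).2]
    · rintro rfl i
      constructor
      · exact (ZMod.val_natCast_of_lt (a i).1.isLt).symm
      · exact (ZMod.val_natCast_of_lt (a i).2.isLt).symm
  by_cases hb : b = eR d n a
  · rw [if_pos hb]
    have := hcond.mpr hb
    calc (∏ i : Fin n, if (((a i).1:ℕ) = (b i).1.val ∧ ((a i).2:ℕ) = (b i).2.val) then (d:ℂ) else 0)
        = ∏ i : Fin n, (d:ℂ) := Finset.prod_congr rfl (fun i _ => if_pos (this i))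
      _ = (d:ℂ)^n := by simp
  · rw [if_neg hb]
    have : ∃ i, ¬(((a i).1:ℕ) = (b i).1.val ∧ ((a i).2:ℕ) = (b i).2.val) := by
      by_contra hc
      push_neg at hc
      exact hb (hcond.mp (fun i => ⟨(hc i).1, (hc i).2⟩))
    obtain ⟨i, hi⟩ := this
    exact Finset.prod_eq_zero (Finset.mem_univ i) (if_neg hi)

abbrev E (d n : ℕ) := Fin n → Fin d

def chi (d n : ℕ) (M : Matrix (E d n) (E d n) ℂ) (a : Reps d n) : ℂ :=
  trace ((D d n (toZ a))ᴴ * M)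

lemma chi_expand (d n : ℕ) (M : Matrix (E d n) (E d n) ℂ) (a : Reps d n) :
    chi d n M a = ∑ p : E d n × E d n, (starRingEnd ℂ) (D d n (toZ a) p.2 p.1) * M p.2 p.1 := by
  rw [chi, Fintype.sum_prod_type]
  simp [Matrix.trace, Matrix.mul_apply, Matrix.conjTranspose_apply, Matrix.diag]

lemma plancherel (d n : ℕ) [NeZero d] (M : Matrix (E d n) (E d n) ℂ) :
    ∑ a : Reps d n, chi d n M a * (starRingEnd ℂ) (chi d n M a)
    = (d:ℂ)^n * ∑ p : E d n × E d n, M p.2 p.1 * (starRingEnd ℂ) (M p.2 p.1) := by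
  have hconj : ∀ a, (starRingEnd ℂ) (chi d n M a)
      = ∑ q : E d n × E d n, D d n (toZ a) q.2 q.1 * (starRingEnd ℂ) (M q.2 q.1) := by
    intro a
    rw [chi_expand, map_sum]
    exact Finset.sum_congr rfl (fun q _ => by rw [_root_.map_mul, Complex.conj_conj])
  calc ∑ a : Reps d n, chi d n M a * (starRingEnd ℂ) (chi d n M a)
      = ∑ a : Reps d n, ∑ p : E d n × E d n, ∑ q : E d n × E d n,
          ((starRingEnd ℂ) (D d n (toZ a) p.2 p.1) * D d n (toZ a) q.2 q.1) *
          (M p.2 p.1 * (starRingEnd ℂ) (M q.2 q.1)) := by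
        refine Finset.sum_congr rfl (fun a _ => ?_)
        rw [hconj, chi_expand, Finset.sum_mul_sum]
        exact Finset.sum_congr rfl (fun p _ => Finset.sum_congr rfl (fun q _ => by ring))
    _ = ∑ p : E d n × E d n, ∑ q : E d n × E d n,
          (∑ a : Reps d n, (starRingEnd ℂ) (D d n (toZ a) p.2 p.1) * D d n (toZ a) q.2 q.1) *
          (M p.2 p.1 * (starRingEnd ℂ) (M q.2 q.1)) := by
        rw [Finset.sum_comm]
        refine Finset.sum_congr rfl (fun p _ => ?_)
        rw [Finset.sum_comm]
        refine Finset.sum_congr rfl (fun q _ => ?_)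
        rw [Finset.sum_mul]
    _ = ∑ p : E d n × E d n, ∑ q : E d n × E d n,
          (if q = p then ((d:ℂ))^n else 0) * (M p.2 p.1 * (starRingEnd ℂ) (M q.2 q.1)) := by
        refine Finset.sum_congr rfl (fun p _ => Finset.sum_congr rfl (fun q _ => ?_))
        rw [sum_conj_D_mul]
        have hiff : (p.2 = q.2 ∧ p.1 = q.1) ↔ (q = p) :=
          ⟨fun h => Prod.ext h.2.symm h.1.symm, by rintro rfl; exact ⟨rfl, rfl⟩⟩
        rw [if_congr hiff rfl rfl]
    _ = ∑ p : E d n × E d n, ((d:ℂ))^n * (M p.2 p.1 * (starRingEnd ℂ) (M p.2 p.1)) := by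
        refine Finset.sum_congr rfl (fun p _ => ?_)
        simp only [ite_mul, zero_mul]
        rw [Finset.sum_ite_eq' Finset.univ p
          (fun q => ((d:ℂ))^n * (M p.2 p.1 * (starRingEnd ℂ) (M q.2 q.1)))]
        simp
    _ = _ := by rw [Finset.mul_sum]

lemma chi_stab (d n : ℕ) [NeZero d] (S : AddSubgroup (PS d n)) (f : PS d n → ZMod d)
    [DecidablePred (· ∈ S)]
    (a : Reps d n) :
    chi d n (((d : ℂ) ^ n)⁻¹ •
      ∑ b : PS d n, if b ∈ S then omega d ^ (f b).val • D d n (repz b) else 0) a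
    = if eR d n a ∈ S then omega d ^ (f (eR d n a)).val else 0 := by
  have hdn : ((d:ℂ))^n ≠ 0 := pow_ne_zero n (Nat.cast_ne_zero.mpr (NeZero.ne d))
  rw [chi, Matrix.mul_smul, trace_smul, Matrix.mul_sum, trace_sum]
  have hterm : ∀ b : PS d n,
      trace ((D d n (toZ a))ᴴ * (if b ∈ S then omega d ^ (f b).val • D d n (repz b) else 0))
      = if b = eR d n a then (if b ∈ S then omega d ^ (f b).val * ((d:ℂ))^n else 0) else 0 := by
    intro b
    by_cases hbS : b ∈ S
    · rw [if_pos hbS, Matrix.mul_smul, trace_smul, trace_D_orth, smul_eq_mul]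
      by_cases hba : b = eR d n a
      · rw [if_pos hba, if_pos hba, if_pos hbS]
      · rw [if_neg hba, if_neg hba, mul_zero]
    · rw [if_neg hbS, Matrix.mul_zero, trace_zero]
      simp [hbS]
  simp only [hterm]
  rw [Finset.sum_ite_eq' Finset.univ (eR d n a)
    (fun b => (if b ∈ S then omega d ^ (f b).val * ((d:ℂ))^n else 0))]
  simp only [Finset.mem_univ, if_true, smul_eq_mul]
  by_cases h : eR d n a ∈ S
  · rw [if_pos h, if_pos h]
    field_simp
  · rw [if_neg h, if_neg h, mul_zero]

lemma abs_chi_stab (d n : ℕ) [NeZero d] (S : AddSubgroup (PS d n)) (f : PS d n → ZMod d)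
    [DecidablePred (· ∈ S)] (a : Reps d n) :
    ‖chi d n (((d : ℂ) ^ n)⁻¹ •
      ∑ b : PS d n, if b ∈ S then omega d ^ (f b).val • D d n (repz b) else 0) a‖
    = if eR d n a ∈ S then (1:ℝ) else 0 := by
  rw [chi_stab]
  split
  · rw [norm_pow, abs_omega, one_pow]
  · exact norm_zero

lemma sum_abs_chi_stab (d n : ℕ) [NeZero d] (S : AddSubgroup (PS d n)) (f : PS d n → ZMod d)
    [DecidablePred (· ∈ S)] :
    ∑ a : Reps d n, ‖chi d n (((d : ℂ) ^ n)⁻¹ •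
      ∑ b : PS d n, if b ∈ S then omega d ^ (f b).val • D d n (repz b) else 0) a‖
    = (Nat.card S : ℝ) := by
  simp only [abs_chi_stab]
  rw [Fintype.sum_equiv (eR d n) _ (fun b => if b ∈ S then (1:ℝ) else 0) (fun a => rfl)]
  rw [Finset.sum_boole]
  rw [Nat.card_eq_fintype_card, Fintype.card_subtype]

lemma chi_smul_sum (d n : ℕ) (kk : ℕ) (x : Fin kk → ℝ)
    (σ : Fin kk → Matrix (E d n) (E d n) ℂ) (a : Reps d n) :
    chi d n (∑ i, (x i : ℂ) • σ i) a = ∑ i, (x i : ℂ) * chi d n (σ i) a := by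
  rw [chi, Matrix.mul_sum, trace_sum]
  exact Finset.sum_congr rfl (fun i _ => by rw [Matrix.mul_smul, trace_smul, smul_eq_mul, chi])

/-- If a pure state `ψ = |ψ⟩⟨ψ|` decomposes as `ψ = Σᵢ xᵢ σᵢ` with
real `xᵢ` and stabilizer states `σᵢ`, then
`Σ_a |Tr(D_a† ψ)|⁴ ≥ d^n/(Σᵢ |xᵢ|)²`; equivalently
`(Σᵢ |xᵢ|)² ≥ 1/(1 − M(ψ))`, where `M(ψ) = 1 − d^{−n} Σ_a |Tr(D_a† ψ)|⁴` is the
linear (2-Tsallis) stabilizer entropy. -/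
theorem robustness_lower_bound_from_linear_SE
    (d n : ℕ) [NeZero d] (hd : 2 ≤ d) (hn : 1 ≤ n)
    (ψ : Matrix (Fin n → Fin d) (Fin n → Fin d) ℂ)
    (v : (Fin n → Fin d) → ℂ) (hv : ∑ j, ‖v j‖ ^ 2 = 1)
    (hψ : ∀ j k, ψ j k = v j * star (v k))
    (k : ℕ) (x : Fin k → ℝ)
    (σ : Fin k → Matrix (Fin n → Fin d) (Fin n → Fin d) ℂ)
    (hσ : ∀ i, IsStabilizerState d n (σ i))
    (hdecomp : ψ = ∑ i, (x i : ℂ) • σ i) :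
    (∑ a : Reps d n, ‖trace ((D d n (toZ a))ᴴ * ψ)‖ ^ 4
        ≥ (d : ℝ) ^ n / (∑ i, |x i|) ^ 2) ∧
    (∑ i, |x i|) ^ 2 ≥
      1 / (1 - (1 - ((d : ℝ) ^ n)⁻¹ *
        ∑ a : Reps d n, ‖trace ((D d n (toZ a))ᴴ * ψ)‖ ^ 4)) := by
  classical
  set u : Reps d n → ℝ := fun a => ‖chi d n ψ a‖ with hu
  have hgoalsum : ∀ m : ℕ, (∑ a : Reps d n, ‖trace ((D d n (toZ a))ᴴ * ψ)‖ ^ m)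
      = ∑ a : Reps d n, u a ^ m := fun m => rfl
  set R : ℝ := ∑ i, |x i| with hR
  set A : ℝ := ∑ a, u a with hA
  set B : ℝ := ∑ a, u a ^ 2 with hB
  set T : ℝ := ∑ a, u a ^ 3 with hT
  set C : ℝ := ∑ a, u a ^ 4 with hC
  have hu0 : ∀ a, 0 ≤ u a := fun a => norm_nonneg _
  have hA0 : 0 ≤ A := Finset.sum_nonneg (fun a _ => hu0 a)
  have hC0 : 0 ≤ C := Finset.sum_nonneg (fun a _ => by positivity)
  have hR0 : 0 ≤ R := Finset.sum_nonneg (fun i _ => abs_nonneg _)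
  have hdR : (0:ℝ) < (d:ℝ)^n := by positivity
  -- Plancherel : B = d^n
  have hBeq : B = (d:ℝ)^n := by
    have hv1 : (∑ j : E d n, v j * (starRingEnd ℂ) (v j)) = 1 := by
      have : ∀ j : E d n, v j * (starRingEnd ℂ) (v j) = ((‖v j‖ ^ 2 : ℝ) : ℂ) := by
        intro j; rw [Complex.mul_conj, Complex.sq_norm]
      simp only [this]
      rw [← Complex.ofReal_sum, hv, Complex.ofReal_one]
    have hpsi : (∑ p : E d n × E d n, ψ p.2 p.1 * (starRingEnd ℂ) (ψ p.2 p.1)) = 1 := by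
      have hterm : ∀ p : E d n × E d n, ψ p.2 p.1 * (starRingEnd ℂ) (ψ p.2 p.1)
          = (v p.2 * (starRingEnd ℂ) (v p.2)) * (v p.1 * (starRingEnd ℂ) (v p.1)) := by
        intro p
        rw [hψ p.2 p.1]
        simp only [Complex.star_def, _root_.map_mul, Complex.conj_conj]
        ring
      simp only [hterm]
      rw [Fintype.sum_prod_type]
      dsimp only
      have hx : ∀ xx : E d n, (∑ y : E d n, v y * (starRingEnd ℂ) (v y) * (v xx * (starRingEnd ℂ) (v xx)))
          = (v xx * (starRingEnd ℂ) (v xx)) := by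
        intro xx; rw [← Finset.sum_mul, hv1, one_mul]
      simp only [hx]
      exact hv1
    have hcast : ((B : ℝ) : ℂ) = ∑ a : Reps d n, chi d n ψ a * (starRingEnd ℂ) (chi d n ψ a) := by
      rw [hB, Complex.ofReal_sum]
      refine Finset.sum_congr rfl (fun a _ => ?_)
      rw [Complex.mul_conj, Complex.sq_norm]
    rw [plancherel, hpsi, mul_one] at hcast
    have : ((B : ℝ) : ℂ) = (((d:ℝ)^n : ℝ) : ℂ) := by rw [hcast]; push_cast; ring
    exact_mod_cast this
  -- triangle : A ≤ R * d^n
  have hAle : A ≤ R * (d:ℝ)^n := by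
    have habs : ∀ a, u a ≤ ∑ i, |x i| * ‖chi d n (σ i) a‖ := by
      intro a
      rw [hu]
      simp only []
      rw [hdecomp, chi_smul_sum]
      refine le_trans (norm_sum_le _ _) (le_of_eq ?_)
      refine Finset.sum_congr rfl (fun i _ => ?_)
      rw [norm_mul, Complex.norm_real, Real.norm_eq_abs]
    have hstab : ∀ i, (∑ a, ‖chi d n (σ i) a‖) = (d:ℝ)^n := by
      intro i
      obtain ⟨-, -, -, S, f, -, hcard, -, hform⟩ := hσ i
      rw [hform]
      rw [sum_abs_chi_stab d n S f]
      rw [hcard]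
      push_cast
      ring
    calc A ≤ ∑ a, ∑ i, |x i| * ‖chi d n (σ i) a‖ :=
          Finset.sum_le_sum (fun a _ => habs a)
      _ = ∑ i, |x i| * ∑ a, ‖chi d n (σ i) a‖ := by
          rw [Finset.sum_comm]
          exact Finset.sum_congr rfl (fun i _ => by rw [Finset.mul_sum])
      _ = ∑ i, |x i| * (d:ℝ)^n := Finset.sum_congr rfl (fun i _ => by rw [hstab i])
      _ = R * (d:ℝ)^n := by rw [hR, Finset.sum_mul]
  -- Cauchy-Schwarz twice
  have cs1 : B^2 ≤ A * T := by
    have h := Finset.sum_mul_sq_le_sq_mul_sq Finset.univ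
      (fun a => Real.sqrt (u a)) (fun a => Real.sqrt (u a) * u a)
    have e1 : (∑ a, Real.sqrt (u a) * (Real.sqrt (u a) * u a)) = B := by
      rw [hB]
      refine Finset.sum_congr rfl (fun a _ => ?_)
      rw [← mul_assoc, Real.mul_self_sqrt (hu0 a)]
      ring
    have e2 : (∑ a, Real.sqrt (u a) ^ 2) = A := by
      rw [hA]
      exact Finset.sum_congr rfl (fun a _ => Real.sq_sqrt (hu0 a))
    have e3 : (∑ a, (Real.sqrt (u a) * u a) ^ 2) = T := by
      rw [hT]
      refine Finset.sum_congr rfl (fun a _ => ?_)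
      rw [mul_pow, Real.sq_sqrt (hu0 a)]
      ring
    rw [e1, e2, e3] at h
    exact h
  have cs2 : T^2 ≤ B * C := by
    have h := Finset.sum_mul_sq_le_sq_mul_sq Finset.univ (fun a => u a) (fun a => u a ^ 2)
    have e1 : (∑ a, u a * u a ^ 2) = T := by
      rw [hT]; exact Finset.sum_congr rfl (fun a _ => by ring)
    have e2 : (∑ a, (u a)^2) = B := rfl
    have e3 : (∑ a, (u a ^ 2) ^ 2) = C := by
      rw [hC]; exact Finset.sum_congr rfl (fun a _ => by ring)
    rw [e1, e2, e3] at h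
    exact h
  have hB0 : (0:ℝ) < B := hBeq ▸ hdR
  have hT0 : 0 ≤ T := Finset.sum_nonneg (fun a _ => by positivity)
  -- B^3 ≤ A^2 * C
  have key : B^3 ≤ A^2 * C := by
    have h4 : B^4 ≤ A^2 * (B * C) := by
      calc B^4 = (B^2)^2 := by ring
        _ ≤ (A*T)^2 := by
            apply pow_le_pow_left₀ (sq_nonneg B) cs1
        _ = A^2 * T^2 := by ring
        _ ≤ A^2 * (B*C) := by
            exact mul_le_mul_of_nonneg_left cs2 (sq_nonneg A)
    have := le_of_mul_le_mul_right (by calc B^3 * B = B^4 := by ring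
      _ ≤ A^2*(B*C) := h4
      _ = (A^2*C)*B := by ring) hB0
    exact this
  -- main inequality : d^n ≤ R^2 * C
  have hmain : (d:ℝ)^n ≤ R^2 * C := by
    have hA2 : A^2 ≤ (R * (d:ℝ)^n)^2 := pow_le_pow_left₀ hA0 hAle 2
    have h5 : B^3 ≤ (R * (d:ℝ)^n)^2 * C :=
      le_trans key (mul_le_mul_of_nonneg_right hA2 hC0)
    rw [hBeq] at h5
    have hd2 : (0:ℝ) < ((d:ℝ)^n)^2 := by positivity
    have := le_of_mul_le_mul_right (by calc (d:ℝ)^n * ((d:ℝ)^n)^2 = ((d:ℝ)^n)^3 := by ring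
      _ ≤ (R * (d:ℝ)^n)^2 * C := h5
      _ = (R^2*C) * ((d:ℝ)^n)^2 := by ring) hd2
    exact this
  have hC0' : (0:ℝ) < C := by
    rcases lt_or_eq_of_le hC0 with h | h
    · exact h
    · exfalso; rw [← h, mul_zero] at hmain; linarith
  have hR0' : (0:ℝ) < R := by
    rcases lt_or_eq_of_le hR0 with h | h
    · exact h
    · exfalso; rw [← h] at hmain; simp at hmain; linarith
  constructor
  · rw [hgoalsum 4, ← hC]
    rw [ge_iff_le, div_le_iff₀ (by positivity : (0:ℝ) < R^2)]
    linarith [hmain]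
  · rw [hgoalsum 4, ← hC]
    have hsimp : 1 - (1 - ((d:ℝ)^n)⁻¹ * C) = C / (d:ℝ)^n := by
      field_simp
      ring
    rw [hsimp, one_div_div, ge_iff_le, div_le_iff₀ hC0']
    linarith [hmain]
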